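/- Every GMSC program of formula depth D can be transformed into an equivalent GMSC program in which (1) each terminal clause has body ⊥, (2) every iteration clause has the same formula depth max(3, D+2), and (3) in every conjunction subschema φ ∧ θ where neither conjunct is ⊤, both conjuncts have equal formula depth. -/

import Mathlib

/-- A finite directed node-labeled graph: finite node set `V`, out-neighbour
finsets `adj v`, and a labeling of nodes by sets of node label symbols from `α`. -/
structure LGraph (α : Type) : Type 1 where
  V : Type
  fintypeV : Fintype V
  adj : V → Finset V
  label : V → Set α

attribute [instance] LGraph.fintypeV

/-- Formulas of graded modal logic GML over node label symbols `α`: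
`⊤`, labels, negation, conjunction, and graded diamonds `◇_{≥k}`. -/
inductive GML (α : Type) : Type where
  | top : GML α
  | lab : α → GML α
  | neg : GML α → GML α
  | and : GML α → GML α → GML α
  | dia : ℕ → GML α → GML α

/-- Truth of a GML formula at a node of a labeled graph; `dia k φ` (`◇_{≥k}φ`)
holds iff at least `k` out-neighbours satisfy `φ`. -/
def GML.sat {α : Type} (G : LGraph α) : GML α → G.V → Prop
  | .top, _ => True
  | .lab p, v => p ∈ G.label v
  | .neg φ, v => ¬ GML.sat G φ v
  | .and φ ψ, v => GML.sat G φ v ∧ GML.sat G ψ v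
  | .dia k φ, v => ∃ s : Finset G.V, s ⊆ G.adj v ∧ k ≤ s.card ∧ ∀ u ∈ s, GML.sat G φ u

/-- `⊥` as a GML formula. -/
def GML.bot {α : Type} : GML α := .neg .top

/-- `□φ := ¬◇_{≥1}¬φ`. -/
def GML.box {α : Type} (φ : GML α) : GML α := .neg (.dia 1 (.neg φ))

/-- `◇_{=n}φ := ◇_{≥n}φ ∧ ¬◇_{≥n+1}φ`. -/
def GML.diaEq {α : Type} (n : ℕ) (φ : GML α) : GML α := .and (.dia n φ) (.neg (.dia (n + 1) φ))

/-- Schemata of GMSC over node label symbols `α` and head predicates (schema variables) `ν`. -/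
inductive Schema (α ν : Type) : Type where
  | top : Schema α ν
  | lab : α → Schema α ν
  | var : ν → Schema α ν
  | neg : Schema α ν → Schema α ν
  | and : Schema α ν → Schema α ν → Schema α ν
  | dia : ℕ → Schema α ν → Schema α ν

/-- Substituting a GML formula for each head predicate of a schema. -/
def Schema.subst {α ν : Type} (σ : ν → GML α) : Schema α ν → GML α
  | .top => .top
  | .lab p => .lab p
  | .var X => σ X
  | .neg φ => .neg (φ.subst σ)
  | .and φ ψ => .and (φ.subst σ) (ψ.subst σ)
  | .dia k φ => .dia k (φ.subst σ)

/-- A GMSC program over node label symbols `α` with head predicates `ν`: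
terminal clauses `X(0) :− term X`, iteration clauses `X :− iter X`, and a set
`app` of appointed predicates. -/
structure Program (α ν : Type) where
  term : ν → GML α
  iter : ν → Schema α ν
  app : Set ν

/-- The `n`-th iteration formula `Xⁿ` of a head predicate `X`: `X⁰` is the terminal body,
and `X^{n+1}` is the iteration body with each head predicate `Y` replaced by `Yⁿ`. -/
def Program.iterFormula {α ν : Type} (P : Program α ν) : ℕ → ν → GML α
  | 0 => P.term
  | n + 1 => fun X => (P.iter X).subst (P.iterFormula n)

/-- The program accepts `(G, w)` iff some appointed predicate's iteration formula is
true at `w` in some round. -/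
def Program.accepts {α ν : Type} (P : Program α ν) (G : LGraph α) (w : G.V) : Prop :=
  ∃ X ∈ P.app, ∃ n : ℕ, GML.sat G (P.iterFormula n X) w

/-- The formula depth of a GML formula: maximal nesting of `¬`, `∧`, `◇_{≥k}`. -/
def GML.fdepth {α : Type} : GML α → ℕ
  | .top => 0
  | .lab _ => 0
  | .neg φ => φ.fdepth + 1
  | .and φ ψ => max φ.fdepth ψ.fdepth + 1
  | .dia _ φ => φ.fdepth + 1

/-- The formula depth of a GMSC schema: maximal nesting of `¬`, `∧`, `◇_{≥k}`. -/
def Schema.fdepth {α ν : Type} : Schema α ν → ℕ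
  | .top => 0
  | .lab _ => 0
  | .var _ => 0
  | .neg φ => φ.fdepth + 1
  | .and φ ψ => max φ.fdepth ψ.fdepth + 1
  | .dia _ φ => φ.fdepth + 1

/-- A schema is balanced if in every conjunction subschema `φ ∧ θ` where neither conjunct
is `⊤`, both conjuncts have the same formula depth. -/
def Schema.balanced {α ν : Type} : Schema α ν → Prop
  | .top => True
  | .lab _ => True
  | .var _ => True
  | .neg φ => φ.balanced
  | .and φ ψ =>
      ((φ ≠ Schema.top ∧ ψ ≠ Schema.top) → φ.fdepth = ψ.fdepth) ∧ φ.balanced ∧ ψ.balanced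
  | .dia _ φ => φ.balanced

/-- The formula depth of a GMSC program: the maximum formula depth of its clause bodies. -/
def Program.fdepth {α ν : Type} [Fintype ν] (P : Program α ν) : ℕ :=
  Finset.univ.sup fun X : ν => max (P.term X).fdepth (P.iter X).fdepth

namespace S12
open GML Schema

variable {α ν : Type}

/-- Embed a GML formula as a variable-free schema. -/
def emb : GML α → Schema α ν
  | .top => .top
  | .lab p => .lab p
  | .neg f => .neg (emb f)
  | .and f g => .and (emb f) (emb g)
  | .dia k f => .dia k (emb f)

@[simp] lemma subst_emb (σ : ν → GML α) (f : GML α) : (emb f).subst σ = f := by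
  induction f <;> simp [emb, Schema.subst, *]

@[simp] lemma fdepth_emb (f : GML α) : (emb f : Schema α ν).fdepth = f.fdepth := by
  induction f <;> simp [emb, Schema.fdepth, GML.fdepth, *]

/-- Rename variables of a schema. -/
def mapv {ν' : Type} (g : ν → ν') : Schema α ν → Schema α ν'
  | .top => .top
  | .lab p => .lab p
  | .var v => .var (g v)
  | .neg φ => .neg (mapv g φ)
  | .and φ ψ => .and (mapv g φ) (mapv g ψ)
  | .dia k φ => .dia k (mapv g φ)

@[simp] lemma subst_mapv {ν' : Type} (g : ν → ν') (σ : ν' → GML α) (φ : Schema α ν) :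
    (mapv g φ).subst σ = φ.subst (σ ∘ g) := by
  induction φ <;> simp [mapv, Schema.subst, *]

@[simp] lemma fdepth_mapv {ν' : Type} (g : ν → ν') (φ : Schema α ν) :
    (mapv g φ).fdepth = φ.fdepth := by
  induction φ <;> simp [mapv, Schema.fdepth, *]

/-- Pad a schema with `k` conjunctions with `⊤`. -/
def spad : ℕ → Schema α ν → Schema α ν
  | 0, φ => φ
  | k + 1, φ => (spad k φ).and .top

@[simp] lemma fdepth_spad (k : ℕ) (φ : Schema α ν) : (spad k φ).fdepth = φ.fdepth + k := by
  induction k with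
  | zero => rfl
  | succ k ih => simp [spad, Schema.fdepth, ih]; omega

lemma balanced_spad (k : ℕ) {φ : Schema α ν} (h : φ.balanced) : (spad k φ).balanced := by
  induction k with
  | zero => exact h
  | succ k ih =>
    refine ⟨fun h' => absurd rfl h'.2, ih, trivial⟩

lemma sat_spad (k : ℕ) (φ : Schema α ν) (σ : ν → GML α) (G : LGraph α) (u : G.V) :
    GML.sat G ((spad k φ).subst σ) u ↔ GML.sat G (φ.subst σ) u := by
  induction k with
  | zero => rfl
  | succ k ih => simp [spad, Schema.subst, GML.sat, ih]

/-- Balance all conjunctions of a schema by padding the shallower conjunct. -/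
def sbal : Schema α ν → Schema α ν
  | .and φ ψ => .and (spad (ψ.fdepth - φ.fdepth) (sbal φ)) (spad (φ.fdepth - ψ.fdepth) (sbal ψ))
  | .neg φ => .neg (sbal φ)
  | .dia k φ => .dia k (sbal φ)
  | x => x

@[simp] lemma fdepth_sbal (φ : Schema α ν) : (sbal φ).fdepth = φ.fdepth := by
  induction φ with
  | and φ ψ ihφ ihψ => simp [sbal, Schema.fdepth, ihφ, ihψ]; omega
  | neg φ ih => simp [sbal, Schema.fdepth, ih]
  | dia k φ ih => simp [sbal, Schema.fdepth, ih]
  | top => rfl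
  | lab p => rfl
  | var v => rfl

lemma balanced_sbal (φ : Schema α ν) : (sbal φ).balanced := by
  induction φ with
  | and φ ψ ihφ ihψ =>
    refine ⟨fun _ => ?_, balanced_spad _ ihφ, balanced_spad _ ihψ⟩
    simp [fdepth_sbal]; omega
  | neg φ ih => exact ih
  | dia k φ ih => exact ih
  | top => trivial
  | lab p => trivial
  | var v => trivial

lemma sat_sbal (φ : Schema α ν) (σ : ν → GML α) (G : LGraph α) (u : G.V) :
    GML.sat G ((sbal φ).subst σ) u ↔ GML.sat G (φ.subst σ) u := by
  induction φ generalizing u with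
  | and φ ψ ihφ ihψ =>
    simp only [sbal, Schema.subst, GML.sat]
    rw [sat_spad, sat_spad, ihφ, ihψ]
  | neg φ ih => simp [sbal, Schema.subst, GML.sat, ih]
  | dia k φ ih =>
    simp only [sbal, Schema.subst, GML.sat]
    constructor <;> (rintro ⟨s, h1, h2, h3⟩; exact ⟨s, h1, h2, fun x hx => by
      first
        | exact (ih x).mp (h3 x hx)
        | exact (ih x).mpr (h3 x hx)⟩)
  | top => rfl
  | lab p => rfl
  | var v => rfl

/-- Balance a schema and pad it to depth exactly `M`. -/
def fixTo (M : ℕ) (φ : Schema α ν) : Schema α ν := spad (M - φ.fdepth) (sbal φ)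

lemma fdepth_fixTo {M : ℕ} {φ : Schema α ν} (h : φ.fdepth ≤ M) : (fixTo M φ).fdepth = M := by
  simp [fixTo]; omega

lemma balanced_fixTo (M : ℕ) (φ : Schema α ν) : (fixTo M φ).balanced :=
  balanced_spad _ (balanced_sbal φ)

lemma sat_fixTo (M : ℕ) (φ : Schema α ν) (σ : ν → GML α) (G : LGraph α) (u : G.V) :
    GML.sat G ((fixTo M φ).subst σ) u ↔ GML.sat G (φ.subst σ) u :=
  (sat_spad _ _ _ _ _).trans (sat_sbal _ _ _ _)

lemma sat_subst_congr {σ τ : ν → GML α} (G : LGraph α)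
    (h : ∀ Y (u : G.V), GML.sat G (σ Y) u ↔ GML.sat G (τ Y) u) :
    ∀ (φ : Schema α ν) (u : G.V), GML.sat G (φ.subst σ) u ↔ GML.sat G (φ.subst τ) u := by
  intro φ
  induction φ with
  | top => intro u; rfl
  | lab p => intro u; rfl
  | var v => exact h v
  | neg φ ih => intro u; simp [Schema.subst, GML.sat, ih]
  | and φ ψ ihφ ihψ => intro u; simp [Schema.subst, GML.sat, ihφ, ihψ]
  | dia k φ ih =>
    intro u
    simp only [Schema.subst, GML.sat]
    constructor <;> (rintro ⟨s, h1, h2, h3⟩; exact ⟨s, h1, h2, fun x hx => by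
      first
        | exact (ih x).mp (h3 x hx)
        | exact (ih x).mpr (h3 x hx)⟩)

end S12
namespace S12

inductive Role : Type
  | main | cmpl | hold | uu | ub | zz | ww
  deriving DecidableEq

instance : Fintype Role where
  elems := {Role.main, Role.cmpl, Role.hold, Role.uu, Role.ub, Role.zz, Role.ww}
  complete := by intro x; cases x <;> simp

inductive Aux : Type
  | i1 | i2 | i3 | ee
  deriving DecidableEq

instance : Fintype Aux where
  elems := {Aux.i1, Aux.i2, Aux.i3, Aux.ee}
  complete := by intro x; cases x <;> simp

abbrev NV (ν : Type) : Type := (Role × ν) ⊕ Aux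

variable {α ν : Type}

/-- The raw (unpadded) iteration bodies of the transformed program. -/
def rawIter (P : Program α ν) : NV ν → Schema α (NV ν)
  | .inr .i1 => .top
  | .inr .i2 => .var (.inr .i1)
  | .inr .i3 => .var (.inr .i2)
  | .inr .ee => .neg (.var (.inr .i2))
  | .inl (.main, X) => mapv (fun Y => .inl (Role.hold, Y)) (P.iter X)
  | .inl (.cmpl, X) => .neg (mapv (fun Y => .inl (Role.hold, Y)) (P.iter X))
  | .inl (.hold, X) =>
      .and (.neg (.and (.var (.inr .i3)) (.var (.inl (.cmpl, X)))))
           (.neg (.and (.var (.inr .ee)) (.var (.inl (.ub, X)))))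
  | .inl (.uu, X) => emb (P.term X)
  | .inl (.ub, X) => .neg (emb (P.term X))
  | .inl (.zz, X) => emb (P.term X)
  | .inl (.ww, X) => .and (.var (.inr .i3)) (.var (.inl (.main, X)))

variable [Fintype ν]

def MD (P : Program α ν) : ℕ := max 3 (P.fdepth + 2)

/-- The transformed program. -/
def PP (P : Program α ν) : Program α (NV ν) where
  term := fun _ => GML.bot
  iter := fun v => fixTo (MD P) (rawIter P v)
  app := {v | ∃ X ∈ P.app, v = .inl (Role.ww, X) ∨ v = .inl (Role.zz, X)}

lemma term_fdepth_le (P : Program α ν) (X : ν) : (P.term X).fdepth ≤ P.fdepth := by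
  have h : _ ≤ P.fdepth := Finset.le_sup (f := fun X : ν => max (P.term X).fdepth (P.iter X).fdepth) (Finset.mem_univ X)
  exact le_trans (le_max_left _ _) h

lemma iter_fdepth_le (P : Program α ν) (X : ν) : (P.iter X).fdepth ≤ P.fdepth := by
  have h : _ ≤ P.fdepth := Finset.le_sup (f := fun X : ν => max (P.term X).fdepth (P.iter X).fdepth) (Finset.mem_univ X)
  exact le_trans (le_max_right _ _) h

lemma rawIter_fdepth_le (P : Program α ν) (v : NV ν) : (rawIter P v).fdepth ≤ MD P := by
  have hM3 : 3 ≤ MD P := le_max_left _ _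
  have hMD : P.fdepth + 2 ≤ MD P := le_max_right _ _
  rcases v with ⟨r, X⟩ | a
  · have ht := term_fdepth_le P X
    have hi := iter_fdepth_le P X
    cases r <;> simp [rawIter, Schema.fdepth] <;> omega
  · cases a <;> simp [rawIter, Schema.fdepth] <;> omega

end S12
namespace S12

variable {α ν : Type} [Fintype ν]

@[simp] lemma sat_bot (G : LGraph α) (u : G.V) : GML.sat G GML.bot u ↔ False := by
  simp [GML.bot, GML.sat]

lemma sat_F0 (P : Program α ν) (G : LGraph α) (u : G.V) (v : NV ν) :
    GML.sat G ((PP P).iterFormula 0 v) u ↔ False := sat_bot G u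

lemma sat_step (P : Program α ν) (G : LGraph α) (u : G.V) (n : ℕ) (v : NV ν) :
    GML.sat G ((PP P).iterFormula (n + 1) v) u ↔
      GML.sat G ((rawIter P v).subst ((PP P).iterFormula n)) u := by
  have h : (PP P).iterFormula (n + 1) v
      = (fixTo (MD P) (rawIter P v)).subst ((PP P).iterFormula n) := rfl
  rw [h]
  exact sat_fixTo _ _ _ _ _

lemma sat_i1 (P : Program α ν) (G : LGraph α) (u : G.V) (n : ℕ) :
    GML.sat G ((PP P).iterFormula n (.inr .i1)) u ↔ 1 ≤ n := by
  cases n with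
  | zero => simp [sat_F0]
  | succ n => rw [sat_step]; simp [rawIter, Schema.subst, GML.sat]

lemma sat_i2 (P : Program α ν) (G : LGraph α) (u : G.V) (n : ℕ) :
    GML.sat G ((PP P).iterFormula n (.inr .i2)) u ↔ 2 ≤ n := by
  cases n with
  | zero => simp [sat_F0]
  | succ n =>
    rw [sat_step]
    simp only [rawIter, Schema.subst, sat_i1]
    omega

lemma sat_i3 (P : Program α ν) (G : LGraph α) (u : G.V) (n : ℕ) :
    GML.sat G ((PP P).iterFormula n (.inr .i3)) u ↔ 3 ≤ n := by
  cases n with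
  | zero => simp [sat_F0]
  | succ n =>
    rw [sat_step]
    simp only [rawIter, Schema.subst, sat_i2]
    omega

lemma sat_ee (P : Program α ν) (G : LGraph α) (u : G.V) (n : ℕ) :
    GML.sat G ((PP P).iterFormula n (.inr .ee)) u ↔ n = 1 ∨ n = 2 := by
  cases n with
  | zero => simp [sat_F0]
  | succ n =>
    rw [sat_step]
    simp only [rawIter, Schema.subst, GML.sat, sat_i2]
    omega

lemma sat_uu (P : Program α ν) (G : LGraph α) (u : G.V) (n : ℕ) (X : ν) :
    GML.sat G ((PP P).iterFormula n (.inl (.uu, X))) u ↔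
      1 ≤ n ∧ GML.sat G (P.term X) u := by
  cases n with
  | zero => simp [sat_F0]
  | succ n =>
    rw [sat_step]
    simp [rawIter, subst_emb]

lemma sat_ub (P : Program α ν) (G : LGraph α) (u : G.V) (n : ℕ) (X : ν) :
    GML.sat G ((PP P).iterFormula n (.inl (.ub, X))) u ↔
      1 ≤ n ∧ ¬ GML.sat G (P.term X) u := by
  cases n with
  | zero => simp [sat_F0]
  | succ n =>
    rw [sat_step]
    simp [rawIter, Schema.subst, GML.sat, subst_emb]

lemma sat_zz (P : Program α ν) (G : LGraph α) (u : G.V) (n : ℕ) (X : ν) :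
    GML.sat G ((PP P).iterFormula n (.inl (.zz, X))) u ↔
      1 ≤ n ∧ GML.sat G (P.term X) u := by
  cases n with
  | zero => simp [sat_F0]
  | succ n =>
    rw [sat_step]
    simp [rawIter, subst_emb]

lemma sat_cmpl (P : Program α ν) (G : LGraph α) (u : G.V) (n : ℕ) (X : ν) :
    GML.sat G ((PP P).iterFormula (n + 1) (.inl (.cmpl, X))) u ↔
      ¬ GML.sat G ((PP P).iterFormula (n + 1) (.inl (.main, X))) u := by
  rw [sat_step, sat_step]
  simp [rawIter, Schema.subst, GML.sat]

lemma sat_hold_succ (P : Program α ν) (G : LGraph α) (u : G.V) (n : ℕ) (X : ν) :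
    GML.sat G ((PP P).iterFormula (n + 1) (.inl (.hold, X))) u ↔
      (¬ (3 ≤ n ∧ GML.sat G ((PP P).iterFormula n (.inl (.cmpl, X))) u) ∧
       ¬ ((n = 1 ∨ n = 2) ∧ GML.sat G ((PP P).iterFormula n (.inl (.ub, X))) u)) := by
  rw [sat_step]
  simp [rawIter, Schema.subst, GML.sat, sat_i3, sat_ee]

lemma sat_hold2 (P : Program α ν) (G : LGraph α) (u : G.V) (X : ν) :
    GML.sat G ((PP P).iterFormula 2 (.inl (.hold, X))) u ↔ GML.sat G (P.term X) u := by
  rw [sat_hold_succ, sat_ub]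
  constructor
  · intro ⟨_, h2⟩
    by_contra hA
    exact h2 ⟨Or.inl rfl, le_refl 1, hA⟩
  · intro hA
    exact ⟨fun h => by omega, fun h => h.2.2 hA⟩

lemma sat_hold3 (P : Program α ν) (G : LGraph α) (u : G.V) (X : ν) :
    GML.sat G ((PP P).iterFormula 3 (.inl (.hold, X))) u ↔ GML.sat G (P.term X) u := by
  rw [sat_hold_succ, sat_ub]
  constructor
  · intro ⟨_, h2⟩
    by_contra hA
    exact h2 ⟨Or.inr rfl, by omega, hA⟩
  · intro hA
    exact ⟨fun h => by omega, fun h => h.2.2 hA⟩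

lemma sat_hold_ge (P : Program α ν) (G : LGraph α) (u : G.V) (n : ℕ) (hn : 3 ≤ n) (X : ν) :
    GML.sat G ((PP P).iterFormula (n + 1) (.inl (.hold, X))) u ↔
      GML.sat G ((PP P).iterFormula n (.inl (.main, X))) u := by
  obtain ⟨m, rfl⟩ : ∃ m, n = m + 1 := ⟨n - 1, by omega⟩
  rw [sat_hold_succ, sat_cmpl]
  constructor
  · intro ⟨h1, _⟩
    by_contra hm
    exact h1 ⟨hn, hm⟩
  · intro hm
    exact ⟨fun h => h.2 hm, fun h => by omega⟩

lemma sat_main (P : Program α ν) :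
    ∀ (k : ℕ) (X : ν) (G : LGraph α) (u : G.V),
      GML.sat G ((PP P).iterFormula (k + 3) (.inl (.main, X))) u ↔
        GML.sat G (P.iterFormula ((k + 2) / 2) X) u := by
  intro k
  induction k using Nat.strong_induction_on with
  | _ k ih =>
    intro X G u
    match k with
    | 0 =>
      rw [sat_step]
      simp only [rawIter, subst_mapv]
      exact sat_subst_congr G (fun Y u => sat_hold2 P G u Y) (P.iter X) u
    | 1 =>
      rw [sat_step]
      simp only [rawIter, subst_mapv]
      exact sat_subst_congr G (fun Y u => sat_hold3 P G u Y) (P.iter X) u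
    | (j + 2) =>
      have h4 : (j + 2 + 2) / 2 = (j + 2) / 2 + 1 := by omega
      rw [h4]
      have hstep : (j + 2 + 3) = (j + 4) + 1 := by omega
      rw [hstep, sat_step]
      simp only [rawIter, subst_mapv]
      have hcong : ∀ (Y : ν) (u : G.V),
          GML.sat G (((PP P).iterFormula (j + 4) ∘ (fun Y => Sum.inl (Role.hold, Y))) Y) u ↔
            GML.sat G (P.iterFormula ((j + 2) / 2) Y) u := by
        intro Y u
        have h1 : (j + 4 : ℕ) = (j + 3) + 1 := by omega
        rw [Function.comp_apply, h1, sat_hold_ge P G u (j + 3) (by omega) Y]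
        exact ih j (by omega) Y G u
      have := sat_subst_congr G hcong (P.iter X) u
      rw [this]
      rfl

lemma sat_ww (P : Program α ν) (G : LGraph α) (u : G.V) (n : ℕ) (X : ν) :
    GML.sat G ((PP P).iterFormula (n + 1) (.inl (.ww, X))) u ↔
      3 ≤ n ∧ GML.sat G ((PP P).iterFormula n (.inl (.main, X))) u := by
  rw [sat_step]
  simp [rawIter, Schema.subst, GML.sat, sat_i3]

lemma accepts_iff (P : Program α ν) (G : LGraph α) (w : G.V) :
    P.accepts G w ↔ (PP P).accepts G w := by
  constructor
  · rintro ⟨X, hX, n, hn⟩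
    cases n with
    | zero =>
      refine ⟨.inl (.zz, X), ⟨X, hX, Or.inr rfl⟩, 1, ?_⟩
      rw [sat_zz]
      exact ⟨le_refl 1, hn⟩
    | succ k =>
      refine ⟨.inl (.ww, X), ⟨X, hX, Or.inl rfl⟩, 2 * k + 4, ?_⟩
      have h1 : (2 * k + 4 : ℕ) = (2 * k + 3) + 1 := by omega
      rw [h1, sat_ww]
      refine ⟨by omega, ?_⟩
      have h2 : (2 * k + 3 : ℕ) = (2 * k) + 3 := by omega
      rw [h2, sat_main]
      have h3 : (2 * k + 2) / 2 = k + 1 := by omega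
      rw [h3]
      exact hn
  · rintro ⟨v, ⟨X, hX, hv⟩, n, hn⟩
    rcases hv with rfl | rfl
    · cases n with
      | zero => exact absurd hn (by simp [sat_F0])
      | succ m =>
        rw [sat_ww] at hn
        obtain ⟨hm, hsat⟩ := hn
        obtain ⟨j, rfl⟩ : ∃ j, m = j + 3 := ⟨m - 3, by omega⟩
        rw [sat_main] at hsat
        exact ⟨X, hX, (j + 2) / 2, hsat⟩
    · cases n with
      | zero => exact absurd hn (by simp [sat_F0])
      | succ m =>
        rw [sat_zz] at hn
        exact ⟨X, hX, 0, hn.2⟩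

end S12

/-- Every GMSC program of formula depth `D` can be transformed into an
equivalent GMSC program in which (1) each terminal clause has body `⊥`, (2) every iteration
clause has formula depth exactly `max 3 (D+2)`, and (3) in every conjunction subschema whose
conjuncts are not `⊤`, both conjuncts have equal formula depth. -/
theorem gmsc_depth_balanced_form {α ν : Type} [Fintype ν] (P : Program α ν) :
    ∃ (ν' : Type) (_ : Fintype ν') (P' : Program α ν'),
      (∀ X : ν', P'.term X = GML.bot) ∧
      (∀ X : ν', (P'.iter X).fdepth = max 3 (P.fdepth + 2)) ∧
      (∀ X : ν', (P'.iter X).balanced) ∧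
      (∀ (G : LGraph α) (w : G.V), P.accepts G w ↔ P'.accepts G w) := by
  refine ⟨S12.NV ν, inferInstance, S12.PP P, fun X => rfl, fun v => ?_,
    fun v => S12.balanced_fixTo _ _, fun G w => S12.accepts_iff P G w⟩
  exact S12.fdepth_fixTo (S12.rawIter_fdepth_le P v)
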